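/- Let n be a positive integer and let f : ℝ^n → ℝ^n be a convex topical function. Then the aggregation of the associated graphs of f stabilises at the second step: every strongly connected component of the aggregated graph Γ(P_2) consists of a single vertex, so that P_k = P_2 for all k ≥ 2 and G^∞(f) = Γ(P_2) = G^2(f). -/

import Mathlib

/-- The characteristic vector `e_J` of a set `J` of indices. -/
noncomputable def eVec {n : ℕ} (J : Set (Fin n)) : Fin n → ℝ :=
  J.indicator fun _ => 1

/-- A function `ℝ → ℝ` is unbounded above. -/
def Unbdd (g : ℝ → ℝ) : Prop := ∀ M : ℝ, ∃ u : ℝ, M ≤ g u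

/-- Edge of the aggregated graph `Γ(P)` from the block of `i` to the block of `j`,
where the partition `P` is encoded by the (equivalence) relation `r`. -/
def BlockEdge {n : ℕ} (f : (Fin n → ℝ) → (Fin n → ℝ)) (r : Fin n → Fin n → Prop)
    (i j : Fin n) : Prop :=
  ∃ i', r i i' ∧ Unbdd fun u => f (u • eVec {k | r j k}) i'

/-- The relation encoding the next partition `P_{k+1}`: two indices are related
iff their blocks lie in a common strongly connected component of `Γ(P_k)`. -/
def NextRel {n : ℕ} (f : (Fin n → ℝ) → (Fin n → ℝ)) (r : Fin n → Fin n → Prop) :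
    Fin n → Fin n → Prop :=
  fun i j => r i j ∨
    (Relation.ReflTransGen (BlockEdge f r) i j ∧ Relation.ReflTransGen (BlockEdge f r) j i)

open Relation
open scoped Classical

lemma eVec_apply {n : ℕ} (J : Set (Fin n)) (k : Fin n) :
    eVec J k = if k ∈ J then 1 else 0 := by
  simp [eVec, Set.indicator_apply]

/-- Enlarging the set preserves unboundedness (monotone case). -/
lemma unbdd_mono {n : ℕ} {f : (Fin n → ℝ) → (Fin n → ℝ)} (hmono : Monotone f)
    {J J' : Set (Fin n)} (hJJ' : J ⊆ J') (i : Fin n)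
    (h : Unbdd fun u => f (u • eVec J) i) :
    Unbdd fun u => f (u • eVec J') i := by
  intro M
  obtain ⟨u, hu⟩ := h M
  refine ⟨max u 0, le_trans hu ?_⟩
  refine hmono (fun k => ?_) i
  classical
  simp only [Pi.smul_apply, smul_eq_mul, eVec_apply]
  by_cases hk : k ∈ J
  · simp only [hk, hJJ' hk, if_pos, mul_one]
    exact le_max_left _ _
  · have h0 : (0:ℝ) ≤ max u 0 * (if k ∈ J' then 1 else 0) :=
      mul_nonneg (le_max_right u 0) (by split <;> norm_num)
    simpa [hk] using h0

/-- Convexity: unboundedness on a block implies unboundedness on some singleton. -/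
lemma unbdd_decompose {n : ℕ} {f : (Fin n → ℝ) → (Fin n → ℝ)}
    (hconv : ∀ i : Fin n, ConvexOn ℝ Set.univ fun x : Fin n → ℝ => f x i)
    {J : Set (Fin n)} (hne : J.Nonempty) (i : Fin n)
    (h : Unbdd fun u => f (u • eVec J) i) :
    ∃ j ∈ J, Unbdd fun u => f (u • eVec ({j} : Set (Fin n))) i := by
  classical
  by_contra hcon
  push_neg at hcon
  set t : Finset (Fin n) := (Set.toFinite J).toFinset with ht
  have htmem : ∀ k, k ∈ t ↔ k ∈ J := fun k => (Set.toFinite J).mem_toFinset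
  have htne : t.Nonempty := ⟨hne.choose, (htmem _).2 hne.choose_spec⟩
  set m : ℝ := (t.card : ℝ) with hmdef
  have hm : 0 < m := by
    have h' := Finset.card_pos.2 htne
    rw [hmdef]
    exact_mod_cast h'
  have hbound : ∀ j : Fin n, ∃ Mj : ℝ, ∀ u : ℝ, j ∈ J →
      f (u • eVec ({j} : Set (Fin n))) i < Mj := by
    intro j
    by_cases hj : j ∈ J
    · have hnu := hcon j hj
      unfold Unbdd at hnu
      push_neg at hnu
      obtain ⟨M, hM⟩ := hnu
      exact ⟨M, fun u _ => hM u⟩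
    · exact ⟨0, fun u hj' => absurd hj' hj⟩
  choose Mb hMb using hbound
  -- the decomposition identity
  have hident : ∀ u : ℝ,
      u • eVec J = ∑ j ∈ t, (1/m) • ((m * u) • eVec ({j} : Set (Fin n))) := by
    intro u
    funext k
    simp only [Finset.sum_apply, Pi.smul_apply, smul_eq_mul, eVec_apply]
    by_cases hk : k ∈ J
    · rw [if_pos hk, mul_one,
        Finset.sum_eq_single_of_mem k ((htmem k).2 hk)
          (fun b _ hbk => by
            simp [Set.mem_singleton_iff, show ¬ k = b from fun h => hbk h.symm])]
      simp only [Set.mem_singleton_iff, if_pos rfl, mul_one]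
      field_simp
      simp
    · rw [if_neg hk, mul_zero]
      symm
      refine Finset.sum_eq_zero fun b hb => ?_
      have hkb : ¬ k = b := fun h => hk (h ▸ (htmem b).1 hb)
      simp [Set.mem_singleton_iff, hkb]
  -- Jensen's inequality
  have hjensen : ∀ u : ℝ, f (u • eVec J) i ≤
      ∑ j ∈ t, (1/m) * f ((m * u) • eVec ({j} : Set (Fin n))) i := by
    intro u
    have hsum : ∑ _j ∈ t, (1/m : ℝ) = 1 := by
      rw [Finset.sum_const, nsmul_eq_mul]
      field_simp
      exact hmdef.symm
    have := (hconv i).map_sum_le (t := t) (w := fun _ => 1/m)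
      (p := fun j => (m * u) • eVec ({j} : Set (Fin n)))
      (fun _ _ => by positivity) hsum (fun _ _ => Set.mem_univ _)
    rw [← hident u] at this
    simpa using this
  set M : ℝ := ∑ j ∈ t, (1/m) * Mb j with hMdef
  obtain ⟨u, hu⟩ := h (M + 1)
  have hle : f (u • eVec J) i ≤ M := by
    refine le_trans (hjensen u) (Finset.sum_le_sum fun j hj => ?_)
    exact mul_le_mul_of_nonneg_left
      (le_of_lt (hMb j (m * u) ((htmem j).1 hj))) (by positivity)
  simp only at hu
  linarith

theorem aggregation_stabilises_at_two_of_convex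
    (n : ℕ) (hn : 0 < n) (f : (Fin n → ℝ) → (Fin n → ℝ))
    (htop : ∀ (x : Fin n → ℝ) (h : ℝ), f (fun i => x i + h) = fun i => f x i + h)
    (hmono : Monotone f)
    (hconv : ∀ i : Fin n, ConvexOn ℝ Set.univ fun x : Fin n → ℝ => f x i) :
    (∀ i j : Fin n,
      Relation.ReflTransGen (BlockEdge f (NextRel f Eq)) i j →
      Relation.ReflTransGen (BlockEdge f (NextRel f Eq)) j i →
      NextRel f Eq i j) ∧
    (∀ k : ℕ, 1 ≤ k → ∀ i j : Fin n,
      (NextRel f)^[k] Eq i j ↔ NextRel f Eq i j) := by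
  have hr₂refl : ∀ a : Fin n, NextRel f Eq a a := fun a => Or.inl rfl
  have hD : ∀ a b : Fin n, NextRel f Eq a b → ReflTransGen (BlockEdge f Eq) a b := by
    rintro a b (rfl | ⟨h1, h2⟩)
    · exact ReflTransGen.refl
    · exact h1
  have hD' : ∀ a b : Fin n, NextRel f Eq a b → ReflTransGen (BlockEdge f Eq) b a := by
    rintro a b (rfl | ⟨h1, h2⟩)
    · exact ReflTransGen.refl
    · exact h2
  have hE : ∀ i j : Fin n, ReflTransGen (BlockEdge f (NextRel f Eq)) i j →
      ReflTransGen (BlockEdge f Eq) i j := by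
    intro i j h
    induction h with
    | refl => exact ReflTransGen.refl
    | @tail b c h1 h2 ih =>
      obtain ⟨b', hbb', hU⟩ := h2
      have hne : ({k | NextRel f Eq c k} : Set (Fin n)).Nonempty := ⟨c, hr₂refl c⟩
      obtain ⟨j', hj', hU'⟩ := unbdd_decompose hconv hne b' hU
      -- edge b' → j' in Γ(P₁)
      have hedge : BlockEdge f Eq b' j' := by
        refine ⟨b', rfl, ?_⟩
        have hset : ({k | Eq j' k} : Set (Fin n)) = ({j'} : Set (Fin n)) := by
          ext k; simp [eq_comm]
        rw [hset]
        exact hU'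
      exact ((ih.trans (hD b b' hbb')).tail hedge).trans (hD' c j' hj')
  have first : ∀ i j : Fin n,
      ReflTransGen (BlockEdge f (NextRel f Eq)) i j →
      ReflTransGen (BlockEdge f (NextRel f Eq)) j i →
      NextRel f Eq i j := fun i j h1 h2 => Or.inr ⟨hE i j h1, hE j i h2⟩
  refine ⟨first, ?_⟩
  have key : ∀ i j : Fin n, NextRel f (NextRel f Eq) i j ↔ NextRel f Eq i j := by
    intro i j
    constructor
    · rintro (h | ⟨h1, h2⟩)
      · exact h
      · exact first i j h1 h2
    · exact Or.inl
  intro k hk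
  induction k with
  | zero => omega
  | succ k ih =>
    intro i j
    rcases Nat.eq_zero_or_pos k with h0 | hpos
    · subst h0
      rw [Function.iterate_one]
    · have heq : (NextRel f)^[k] Eq = NextRel f Eq :=
        funext fun a => funext fun b => propext (ih hpos a b)
      rw [Function.iterate_succ_apply', heq]
      exact key i j
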